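/- Let O_X = k[x,y]/(x² − y³) and I_D = (x, y) ⊆ O_X (a Kustin–Miller unprojection pair), and let u = y²/x = x/y ∈ I_D^{-1} ⊆ K(X). Then u² − y = 0 in the subring O_X[I_D^{-1}] of the total quotient ring K(X), but u² − y is nonzero in the unprojection ring unpr_{O_X} I_D ≅ O_X[U]/(Ux − y², Uy − x). -/

import Mathlib

open Polynomial in
private lemma cusp_aux_dvd {D : Type*} [CommRing D] [IsDomain D] {c : D} (hc : c ≠ 0)
    {f : Polynomial D} (h : (X ^ 2 - C c) ∣ f * X) : (X ^ 2 - C c) ∣ f := by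
  set p : Polynomial D := X ^ 2 - C c with hp
  have hm : p.Monic := monic_X_pow_sub_C c (by norm_num)
  have hdeg : p.natDegree = 2 := by
    simp [hp, natDegree_X_pow_sub_C]
  have hdiv : f %ₘ p + p * (f /ₘ p) = f := modByMonic_add_div f p
  have h2 : p ∣ (f %ₘ p) * X := by
    have hh : (f %ₘ p) * X = f * X - p * ((f /ₘ p) * X) := by
      linear_combination (X : Polynomial D) * hdiv
    rw [hh]
    exact dvd_sub h (Dvd.intro _ rfl)
  obtain ⟨d, hd⟩ := h2
  by_cases hr : f %ₘ p = 0
  · exact ⟨f /ₘ p, by linear_combination hr - hdiv⟩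
  · exfalso
    have hdne : d ≠ 0 := by
      intro hd0
      rw [hd0, mul_zero, mul_eq_zero] at hd
      rcases hd with hd | hd
      · exact hr hd
      · exact X_ne_zero hd
    have hdegr : (f %ₘ p).natDegree < 2 := by
      have hlt := degree_modByMonic_lt f hm
      have h2' : (f %ₘ p).degree < 2 := lt_of_lt_of_le hlt
        (by rw [degree_eq_natDegree hm.ne_zero, hdeg]; norm_num)
      exact natDegree_lt_iff_degree_lt hr |>.mpr h2'
    have hL : ((f %ₘ p) * X).natDegree = (f %ₘ p).natDegree + 1 := by
      rw [natDegree_mul hr X_ne_zero, natDegree_X]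
    have hR : (p * d).natDegree = 2 + d.natDegree := by
      rw [natDegree_mul hm.ne_zero hdne, hdeg]
    have hdd : d.natDegree = 0 := by
      have := congrArg natDegree hd
      rw [hL, hR] at this
      omega
    have hcoeff := congrArg (fun q => Polynomial.coeff q 0) hd
    simp only [mul_coeff_zero, coeff_X_zero, mul_zero] at hcoeff
    have hp0 : p.coeff 0 = -c := by simp [hp]
    rw [hp0] at hcoeff
    have : d.coeff 0 = 0 := by
      rcases mul_eq_zero.mp hcoeff.symm with h' | h'
      · exact absurd (neg_eq_zero.mp h') hc
      · exact h'
    exact hdne (by rw [eq_C_of_natDegree_eq_zero hdd, this, map_zero])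

theorem cusp_example
    (k : Type*) [Field k] :
    ∀ (A : Type) (_ : CommRing A) (π : MvPolynomial (Fin 2) k →+* A),
      Function.Surjective π →
      RingHom.ker π = Ideal.span {MvPolynomial.X 0 ^ 2 - MvPolynomial.X 1 ^ 3} →
      (∀ u : FractionRing A,
          u * algebraMap A (FractionRing A) (π (MvPolynomial.X 0)) =
            algebraMap A (FractionRing A) (π (MvPolynomial.X 1) ^ 2) →
          u ^ 2 = algebraMap A (FractionRing A) (π (MvPolynomial.X 1))) ∧
      ((Ideal.Quotient.mk (Ideal.span
            ({Polynomial.C (π (MvPolynomial.X 0)) * Polynomial.X -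
                Polynomial.C (π (MvPolynomial.X 1) ^ 2),
              Polynomial.C (π (MvPolynomial.X 1)) * Polynomial.X -
                Polynomial.C (π (MvPolynomial.X 0))} : Set (Polynomial A))))
          (Polynomial.X ^ 2 - Polynomial.C (π (MvPolynomial.X 1))) ≠ 0) := by
  intro A instA π hsurj hker
  set p : MvPolynomial (Fin 2) k := MvPolynomial.X 0 ^ 2 - MvPolynomial.X 1 ^ 3 with hpdef
  -- basic relation x² = y³
  have hpker : p ∈ RingHom.ker π := by
    rw [hker]; exact Ideal.mem_span_singleton_self _
  have hxy : π (MvPolynomial.X 0) ^ 2 = π (MvPolynomial.X 1) ^ 3 := by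
    have h0 : π p = 0 := hpker
    rw [hpdef, map_sub, map_pow, map_pow, sub_eq_zero] at h0
    exact h0
  -- the image of p under finSuccEquiv
  have hc : ((MvPolynomial.X 0 : MvPolynomial (Fin 1) k) ^ 3) ≠ 0 :=
    pow_ne_zero 3 (MvPolynomial.X_ne_zero 0)
  have hep : (MvPolynomial.finSuccEquiv k 1) p =
      Polynomial.X ^ 2 - Polynomial.C ((MvPolynomial.X 0 : MvPolynomial (Fin 1) k) ^ 3) := by
    have h1 : (1 : Fin 2) = Fin.succ 0 := rfl
    rw [hpdef, map_sub, map_pow, map_pow, h1, MvPolynomial.finSuccEquiv_X_succ,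
      MvPolynomial.finSuccEquiv_X_zero, map_pow]
  -- π (X 0) is a non-zero-divisor
  have hx : π (MvPolynomial.X 0) ∈ nonZeroDivisors A := by
    rw [mem_nonZeroDivisors_iff_right]
    intro a ha
    obtain ⟨f, rfl⟩ := hsurj a
    have hmem : f * MvPolynomial.X 0 ∈ RingHom.ker π := by
      rw [RingHom.mem_ker, map_mul]; exact ha
    rw [hker, Ideal.mem_span_singleton] at hmem
    have hdvd2 : (Polynomial.X ^ 2 -
        Polynomial.C ((MvPolynomial.X 0 : MvPolynomial (Fin 1) k) ^ 3)) ∣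
        (MvPolynomial.finSuccEquiv k 1) f * Polynomial.X := by
      have hd := map_dvd (MvPolynomial.finSuccEquiv k 1) hmem
      rw [hep, map_mul, MvPolynomial.finSuccEquiv_X_zero] at hd
      exact hd
    have hdvd3 := cusp_aux_dvd hc hdvd2
    rw [← hep] at hdvd3
    have hdvd4 : p ∣ f := by
      have := map_dvd (MvPolynomial.finSuccEquiv k 1).symm hdvd3
      simpa using this
    show π f = 0
    rw [← RingHom.mem_ker, hker, Ideal.mem_span_singleton]
    exact hdvd4
  constructor
  · -- part 1
    intro u hu
    have hu' : u * algebraMap A (FractionRing A) (π (MvPolynomial.X 0)) =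
        (algebraMap A (FractionRing A) (π (MvPolynomial.X 1))) ^ 2 := by
      rw [hu, map_pow]
    have hX2 : (algebraMap A (FractionRing A) (π (MvPolynomial.X 0))) ^ 2 =
        (algebraMap A (FractionRing A) (π (MvPolynomial.X 1))) ^ 3 := by
      rw [← map_pow, hxy, map_pow]
    have hux : IsUnit (algebraMap A (FractionRing A) (π (MvPolynomial.X 0))) :=
      IsLocalization.map_units (FractionRing A) (⟨_, hx⟩ : nonZeroDivisors A)
    have key : (u ^ 2 - algebraMap A (FractionRing A) (π (MvPolynomial.X 1))) *
        (algebraMap A (FractionRing A) (π (MvPolynomial.X 0))) ^ 2 = 0 := by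
      linear_combination (u * algebraMap A (FractionRing A) (π (MvPolynomial.X 0)) +
        (algebraMap A (FractionRing A) (π (MvPolynomial.X 1))) ^ 2) * hu' -
        (algebraMap A (FractionRing A) (π (MvPolynomial.X 1))) * hX2
    have h0 := ((hux.pow 2).mul_left_eq_zero).mp key
    exact sub_eq_zero.mp h0
  · -- part 2
    have hker0 : ∀ a ∈ RingHom.ker π, MvPolynomial.eval (0 : Fin 2 → k) a = 0 := by
      intro a ha
      rw [hker, Ideal.mem_span_singleton] at ha
      obtain ⟨c, rfl⟩ := ha
      have hp0 : MvPolynomial.eval (0 : Fin 2 → k) p = 0 := by simp [hpdef]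
      rw [map_mul, hp0, zero_mul]
    set e2 := RingHom.quotientKerEquivOfSurjective hsurj with he2
    set ψ : A →+* k :=
      (Ideal.Quotient.lift (RingHom.ker π)
        (MvPolynomial.eval (0 : Fin 2 → k)) hker0).comp e2.symm.toRingHom with hψdef
    have hψ : ∀ f, ψ (π f) = MvPolynomial.eval (0 : Fin 2 → k) f := by
      intro f
      have hfwd : e2 (Ideal.Quotient.mk (RingHom.ker π) f) = π f :=
        RingHom.kerLift_mk π f
      have hsymm : e2.symm (π f) = Ideal.Quotient.mk (RingHom.ker π) f := by
        apply e2.injective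
        rw [RingEquiv.apply_symm_apply, hfwd]
      simp [hψdef, hsymm]
    have hψx : ψ (π (MvPolynomial.X 0)) = 0 := by rw [hψ]; simp
    have hψy : ψ (π (MvPolynomial.X 1)) = 0 := by rw [hψ]; simp
    intro hzero
    rw [Ideal.Quotient.eq_zero_iff_mem] at hzero
    set Φ : Polynomial A →+* Polynomial k := Polynomial.mapRingHom ψ with hΦdef
    have hle : Ideal.span
        ({Polynomial.C (π (MvPolynomial.X 0)) * Polynomial.X -
            Polynomial.C (π (MvPolynomial.X 1) ^ 2),
          Polynomial.C (π (MvPolynomial.X 1)) * Polynomial.X -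
            Polynomial.C (π (MvPolynomial.X 0))} : Set (Polynomial A)) ≤ RingHom.ker Φ := by
      rw [Ideal.span_le]
      rintro q hq
      simp only [Set.mem_insert_iff, Set.mem_singleton_iff] at hq
      rcases hq with rfl | rfl <;>
        simp [hΦdef, RingHom.mem_ker, hψx, hψy, SetLike.mem_coe]
    have hmem := hle hzero
    rw [RingHom.mem_ker] at hmem
    have hΦval : Φ (Polynomial.X ^ 2 - Polynomial.C (π (MvPolynomial.X 1))) =
        Polynomial.X ^ 2 := by
      simp [hΦdef, hψy]
    rw [hΦval] at hmem
    exact pow_ne_zero 2 Polynomial.X_ne_zero hmem
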